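/- The function R ↦ g_NA(z_NA(R), R) is decreasing on (0, ∞): if 0 < R1 ≤ R2 then g_NA(z_NA(R1), R1) ≥ g_NA(z_NA(R2), R2). -/
import Mathlib


/-- The Principal's reduced objective `g_NA(z, R)` in the no-Planner (Nash) model. -/
noncomputable def gNA (k11 k12 k21 k22 : ℝ) (z : Fin 2 → Fin 2 → ℝ) (R : ℝ) : ℝ :=
  -(R / 2) * (z 0 0 + z 0 1 - 1) ^ 2 - (R / 2) * (z 1 0 + z 1 1 - 1) ^ 2
    + z 0 0 / k11 + z 0 1 / k12 + z 1 0 / k21 + z 1 1 / k22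
    - (z 0 0) ^ 2 / (2 * k11) - (z 0 1) ^ 2 / (2 * k12)
    - (z 1 0) ^ 2 / (2 * k21) - (z 1 1) ^ 2 / (2 * k22)

/-- The optimal sensitivities `z_NA(R)` in the no-Planner (Nash) model. -/
noncomputable def zNA (k11 k12 k21 k22 R : ℝ) : Fin 2 → Fin 2 → ℝ :=
  ![![(1 + R * k12) / (1 + R * (k11 + k12)), (1 + R * k11) / (1 + R * (k11 + k12))],
    ![(1 + R * k22) / (1 + R * (k21 + k22)), (1 + R * k21) / (1 + R * (k21 + k22))]]

noncomputable def fpair (a b R : ℝ) : ℝ :=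
  -(R / 2) * ((1 + R * b) / (1 + R * (a + b)) + (1 + R * a) / (1 + R * (a + b)) - 1) ^ 2
    + (1 + R * b) / (1 + R * (a + b)) / a + (1 + R * a) / (1 + R * (a + b)) / b
    - ((1 + R * b) / (1 + R * (a + b))) ^ 2 / (2 * a)
    - ((1 + R * a) / (1 + R * (a + b))) ^ 2 / (2 * b)

lemma fpair_eq (a b R : ℝ) (ha : 0 < a) (hb : 0 < b) (hR : 0 < R) :
    fpair a b R = 1 / (2 * a) + 1 / (2 * b) - R / (2 * (1 + R * (a + b))) := by
  have hD : (0:ℝ) < 1 + R * (a + b) := by positivity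
  unfold fpair
  field_simp
  ring

lemma gNA_zNA_eq (k11 k12 k21 k22 R : ℝ)
    (hk11 : 0 < k11) (hk12 : 0 < k12) (hk21 : 0 < k21) (hk22 : 0 < k22) (hR : 0 < R) :
    gNA k11 k12 k21 k22 (zNA k11 k12 k21 k22 R) R
      = 1 / (2 * k11) + 1 / (2 * k12) + 1 / (2 * k21) + 1 / (2 * k22)
        - R / (2 * (1 + R * (k11 + k12))) - R / (2 * (1 + R * (k21 + k22))) := by
  have key : gNA k11 k12 k21 k22 (zNA k11 k12 k21 k22 R) R
      = fpair k11 k12 R + fpair k21 k22 R := by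
    simp only [gNA, zNA, fpair, Matrix.cons_val_zero, Matrix.cons_val_one, Matrix.head_cons]
    ring
  rw [key, fpair_eq k11 k12 R hk11 hk12 hR, fpair_eq k21 k22 R hk21 hk22 hR]
  ring

lemma frac_mono (s R1 R2 : ℝ) (hs : 0 < s) (hR1 : 0 < R1) (hR12 : R1 ≤ R2) :
    R1 / (2 * (1 + R1 * s)) ≤ R2 / (2 * (1 + R2 * s)) := by
  have h1 : (0:ℝ) < 2 * (1 + R1 * s) := by positivity
  have h2 : (0:ℝ) < 2 * (1 + R2 * s) := by
    have : 0 < R2 := lt_of_lt_of_le hR1 hR12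
    positivity
  rw [div_le_div_iff₀ h1 h2]
  nlinarith

/-- `R ↦ g_NA(z_NA(R), R)` is decreasing on `(0, ∞)`: if `0 < R1 ≤ R2` then
`g_NA(z_NA(R1), R1) ≥ g_NA(z_NA(R2), R2)`. -/
theorem gNA_zNA_antitone (k11 k12 k21 k22 : ℝ)
    (hk11 : 0 < k11) (hk12 : 0 < k12) (hk21 : 0 < k21) (hk22 : 0 < k22)
    (R1 R2 : ℝ) (hR1 : 0 < R1) (hR12 : R1 ≤ R2) :
    gNA k11 k12 k21 k22 (zNA k11 k12 k21 k22 R2) R2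
      ≤ gNA k11 k12 k21 k22 (zNA k11 k12 k21 k22 R1) R1 := by
  have hR2 : 0 < R2 := lt_of_lt_of_le hR1 hR12
  rw [gNA_zNA_eq k11 k12 k21 k22 R1 hk11 hk12 hk21 hk22 hR1,
      gNA_zNA_eq k11 k12 k21 k22 R2 hk11 hk12 hk21 hk22 hR2]
  have hA := frac_mono (k11 + k12) R1 R2 (by positivity) hR1 hR12
  have hB := frac_mono (k21 + k22) R1 R2 (by positivity) hR1 hR12
  linarith
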